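/- Let P(x) = x⁴ + x³ - 15x² - 9x + 54 = (x-2)(x-3)(x+3)², with coefficients a_0 = 54, a_1 = -9, a_2 = -15, a_3 = 1, and define b_j(n) by b_j(4) = -a_j, b_{-1}(n) = 0, b_j(n+1) = b_{j-1}(n) - a_j b_3(n). Then for all n ≥ 4: b_0(n) = -(1/5)n(-3)^n + (21/50)(-3)^n - (1/2)3^n + (27/25)2^n, b_1(n) = (1/10)n(-3)^n - (83/300)(-3)^n - (1/12)3^n + (9/25)2^n, b_2(n) = (1/45)n(-3)^n + (2/225)(-3)^n + (1/9)3^n - (3/25)2^n, and b_3(n) = -(1/90)n(-3)^n + (11/900)(-3)^n + (1/36)3^n - (1/25)2^n. -/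
import Mathlib


theorem stmt_10 (a : ℕ → ℚ) (ha0 : a 0 = 54) (ha1 : a 1 = -9) (ha2 : a 2 = -15)
    (ha3 : a 3 = 1)
    (b : ℕ → ℕ → ℚ)
    (hbk : ∀ j < 4, b j 4 = -a j)
    (hbrec : ∀ n ≥ 4, ∀ j < 4,
      b j (n + 1) = (if j = 0 then 0 else b (j - 1) n) - a j * b 3 n) :
    ∀ n ≥ 4,
      b 0 n = -(1/5) * n * (-3) ^ n + (21/50) * (-3) ^ n - (1/2) * 3 ^ n + (27/25) * 2 ^ n ∧
      b 1 n = (1/10) * n * (-3) ^ n - (83/300) * (-3) ^ n - (1/12) * 3 ^ n + (9/25) * 2 ^ n ∧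
      b 2 n = (1/45) * n * (-3) ^ n + (2/225) * (-3) ^ n + (1/9) * 3 ^ n - (3/25) * 2 ^ n ∧
      b 3 n = -(1/90) * n * (-3) ^ n + (11/900) * (-3) ^ n + (1/36) * 3 ^ n - (1/25) * 2 ^ n := by
  intro n hn
  induction n, hn using Nat.le_induction with
  | base =>
    rw [hbk 0 (by norm_num), hbk 1 (by norm_num), hbk 2 (by norm_num),
      hbk 3 (by norm_num), ha0, ha1, ha2, ha3]
    norm_num
  | succ n hn ih =>
    obtain ⟨h0, h1, h2, h3⟩ := ih
    rw [hbrec n hn 0 (by norm_num), hbrec n hn 1 (by norm_num),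
      hbrec n hn 2 (by norm_num), hbrec n hn 3 (by norm_num)]
    simp only [ha0, ha1, ha2, ha3, h0, h1, h2, h3]
    norm_num [pow_succ]
    refine ⟨by ring, by ring, by ring, by ring⟩
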